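/- Let 0 < u_z < 1. The volume of the region {(x,y,z) : 0 ≤ x,y ≤ 1, 0 ≤ z ≤ u_z, z ≥ x + y − 1, z ≤ x, z ≤ y} equals u_z·(u_z² − 3u_z + 3)/6. -/

import Mathlib

open MeasureTheory Set

theorem stmt_12 (u_z : ℝ) (h0 : 0 < u_z) (h1 : u_z < 1) :
    MeasureTheory.volume {p : ℝ × ℝ × ℝ |
        0 ≤ p.1 ∧ p.1 ≤ 1 ∧ 0 ≤ p.2.1 ∧ p.2.1 ≤ 1 ∧ 0 ≤ p.2.2 ∧ p.2.2 ≤ u_z ∧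
        p.1 + p.2.1 - 1 ≤ p.2.2 ∧ p.2.2 ≤ p.1 ∧ p.2.2 ≤ p.2.1} =
      ENNReal.ofReal (u_z * (u_z ^ 2 - 3 * u_z + 3) / 6) := by
  set S : Set (ℝ × ℝ × ℝ) := {p : ℝ × ℝ × ℝ |
        0 ≤ p.1 ∧ p.1 ≤ 1 ∧ 0 ≤ p.2.1 ∧ p.2.1 ≤ 1 ∧ 0 ≤ p.2.2 ∧ p.2.2 ≤ u_z ∧
        p.1 + p.2.1 - 1 ≤ p.2.2 ∧ p.2.2 ≤ p.1 ∧ p.2.2 ≤ p.2.1} with hS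
  have hSm : MeasurableSet S := by
    rw [hS]; simp only [Set.setOf_and]
    exact (measurableSet_le measurable_const measurable_fst).inter <|
      (measurableSet_le measurable_fst measurable_const).inter <|
      (measurableSet_le measurable_const measurable_snd.fst).inter <|
      (measurableSet_le measurable_snd.fst measurable_const).inter <|
      (measurableSet_le measurable_const measurable_snd.snd).inter <|
      (measurableSet_le measurable_snd.snd measurable_const).inter <|
      (measurableSet_le ((measurable_fst.add measurable_snd.fst).sub measurable_const) measurable_snd.snd).inter <|
      (measurableSet_le measurable_snd.snd measurable_fst).inter
      (measurableSet_le measurable_snd.snd measurable_snd.fst)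
  have key : ∀ x : ℝ, volume (Prod.mk x ⁻¹' S) =
      (Icc (0:ℝ) 1).indicator (fun x => ENNReal.ofReal ((1-x) * min u_z x)) x := by
    intro x
    by_cases hx : x ∈ Icc (0:ℝ) 1
    · obtain ⟨hx0, hx1⟩ := id hx
      have hAm : MeasurableSet (Prod.mk x ⁻¹' S) := hSm.preimage measurable_prodMk_left
      have hswap : volume (Prod.mk x ⁻¹' S) = volume (Prod.swap ⁻¹' (Prod.mk x ⁻¹' S)) := by
        rw [Measure.volume_eq_prod]
        exact ((Measure.measurePreserving_swap).measure_preimage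
          hAm.nullMeasurableSet).symm
      rw [hswap, Measure.volume_eq_prod, Measure.prod_apply (hAm.preimage measurable_swap)]
      have hsl : ∀ z : ℝ, volume (Prod.mk z ⁻¹' (Prod.swap ⁻¹' (Prod.mk x ⁻¹' S))) =
          (Icc 0 (min u_z x)).indicator (fun _ => ENNReal.ofReal (1 - x)) z := by
        intro z
        by_cases hz : z ∈ Icc (0:ℝ) (min u_z x)
        · obtain ⟨hz0, hzm⟩ := id hz
          have hzu : z ≤ u_z := hzm.trans (min_le_left _ _)
          have hzx : z ≤ x := hzm.trans (min_le_right _ _)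
          have hE : Prod.mk z ⁻¹' (Prod.swap ⁻¹' (Prod.mk x ⁻¹' S)) = Icc z (1 + z - x) := by
            ext y
            simp only [mem_preimage, Prod.swap_prod_mk, hS, mem_setOf_eq, mem_Icc]
            constructor
            · rintro ⟨-, -, -, -, -, -, hy1, -, hy2⟩
              exact ⟨hy2, by linarith⟩
            · rintro ⟨hy1, hy2⟩
              refine ⟨hx0, hx1, ?_, ?_, hz0, hzu, ?_, hzx, hy1⟩ <;> linarith
          rw [hE, Real.volume_Icc, indicator_of_mem hz]
          congr 1; ring
        · have hE : Prod.mk z ⁻¹' (Prod.swap ⁻¹' (Prod.mk x ⁻¹' S)) = ∅ := by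
            ext y
            simp only [mem_preimage, Prod.swap_prod_mk, hS, mem_setOf_eq,
              mem_empty_iff_false, iff_false]
            rintro ⟨-, -, -, -, hz0, hzu, -, hzx, -⟩
            exact hz ⟨hz0, le_min hzu hzx⟩
          rw [hE, measure_empty, indicator_of_notMem hz]
      simp_rw [hsl]
      rw [lintegral_indicator measurableSet_Icc, setLIntegral_const, Real.volume_Icc,
        indicator_of_mem hx, sub_zero,
        ← ENNReal.ofReal_mul (by linarith)]
    · have hE : Prod.mk x ⁻¹' S = ∅ := by
        rw [eq_empty_iff_forall_notMem]
        rintro q ⟨h1', h2', -⟩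
        exact hx ⟨h1', h2'⟩
      rw [hE, measure_empty, indicator_of_notMem hx]
  rw [Measure.volume_eq_prod, Measure.prod_apply hSm]
  simp_rw [key]
  rw [lintegral_indicator measurableSet_Icc]
  have hcont : Continuous fun x : ℝ => (1-x) * min u_z x :=
    (continuous_const.sub continuous_id).mul (continuous_const.min continuous_id)
  have hint : IntegrableOn (fun x : ℝ => (1-x) * min u_z x) (Icc 0 1) := hcont.integrableOn_Icc
  have hnn : 0 ≤ᵐ[volume.restrict (Icc (0:ℝ) 1)] fun x => (1-x) * min u_z x := by
    filter_upwards [ae_restrict_mem measurableSet_Icc] with x hx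
    exact mul_nonneg (by linarith [hx.2]) (le_min h0.le hx.1)
  rw [← MeasureTheory.ofReal_integral_eq_lintegral_ofReal hint hnn]
  congr 1
  rw [MeasureTheory.integral_Icc_eq_integral_Ioc, ← intervalIntegral.integral_of_le zero_le_one]
  have hi1 : IntervalIntegrable (fun x : ℝ => (1-x) * min u_z x) volume 0 u_z :=
    hcont.intervalIntegrable _ _
  have hi2 : IntervalIntegrable (fun x : ℝ => (1-x) * min u_z x) volume u_z 1 :=
    hcont.intervalIntegrable _ _
  rw [← intervalIntegral.integral_add_adjacent_intervals hi1 hi2]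
  have e1 : (∫ x in (0:ℝ)..u_z, (1-x) * min u_z x) = ∫ x in (0:ℝ)..u_z, (x - x^2) := by
    apply intervalIntegral.integral_congr
    intro x hx
    rw [uIcc_of_le h0.le] at hx
    show (1 - x) * (min u_z x) = x - x ^ 2
    rw [min_eq_right hx.2]; ring
  have e2 : (∫ x in u_z..(1:ℝ), (1-x) * min u_z x) = ∫ x in u_z..(1:ℝ), (u_z - u_z * x) := by
    apply intervalIntegral.integral_congr
    intro x hx
    rw [uIcc_of_le h1.le] at hx
    show (1 - x) * (min u_z x) = u_z - u_z * x
    rw [min_eq_left hx.1]; ring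
  rw [e1, e2,
    intervalIntegral.integral_sub intervalIntegral.intervalIntegrable_id
      (intervalIntegral.intervalIntegrable_pow 2),
    intervalIntegral.integral_sub intervalIntegrable_const
      (intervalIntegral.intervalIntegrable_id.const_mul u_z)]
  open intervalIntegral in
  rw [integral_id, integral_pow, intervalIntegral.integral_const, intervalIntegral.integral_const_mul, integral_id]
  push_cast [smul_eq_mul]
  ring
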